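/- Let {(Z_λ, ρ_λ)}_{λ∈Λ} be an equicontinuous family of antipodal spaces and fix R > 0. For every ε > 0 there exists δ > 0 (depending only on R and ε) such that: for every antipodal space (Z, ρ_ω), every λ ∈ Λ, every δ-isometry h : (Z, ρ_ω) → (Z_λ, ρ_λ), and every antipodal function ρ on Z_λ that is Moebius equivalent to ρ_λ with ‖τ_ρ‖_∞ ≤ R (where τ_ρ = log(dρ/dρ_λ)), one has ‖D_{ρ_ω}(τ_ρ ∘ h)‖_∞ < ε. -/
import Mathlib


open Filter Topology Metric
open scoped ENNReal

universe u v

/-- A semi-metric (separating function) on a compact metrizable space: continuous, symmetric,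
nonnegative, and vanishing exactly on the diagonal. -/
def IsSemiMetric {Z : Type*} [TopologicalSpace Z] (ρ : Z → Z → ℝ) : Prop :=
  Continuous (Function.uncurry ρ) ∧ (∀ ξ η, ρ ξ η = ρ η ξ) ∧
    (∀ ξ η, 0 ≤ ρ ξ η) ∧ ∀ ξ η, ρ ξ η = 0 ↔ ξ = η

/-- An antipodal function: a semi-metric of diameter at most one such that every point has an
antipode at distance one. -/
def IsAntipodalFn {Z : Type*} [TopologicalSpace Z] (ρ : Z → Z → ℝ) : Prop :=
  IsSemiMetric ρ ∧ (∀ ξ η, ρ ξ η ≤ 1) ∧ ∀ ξ, ∃ η, ρ ξ η = 1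

/-- An `ε`-isometry between semi-metric spaces: distortion less than `ε`, and the image is an
`ε`-net. -/
def IsEpsIsometry {Z₁ : Type*} {Z₂ : Type*} (ρ₁ : Z₁ → Z₁ → ℝ) (ρ₂ : Z₂ → Z₂ → ℝ)
    (ε : ℝ) (f : Z₁ → Z₂) : Prop :=
  (∀ ξ η : Z₁, |ρ₂ (f ξ) (f η) - ρ₁ ξ η| < ε) ∧ ∀ ζ : Z₂, ∃ ξ : Z₁, ρ₂ (f ξ) ζ < ε

/-- An equicontinuous family of semi-metric spaces. -/
def EquicontinuousFamily {ι : Type*} {Z : ι → Type*} (ρ : ∀ i, Z i → Z i → ℝ) : Prop :=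
  ∀ ε : ℝ, 0 < ε → ∃ δ : ℝ, 0 < δ ∧ ∀ (i : ι) (ξ η : Z i), ρ i ξ η < δ →
    ∀ ζ : Z i, |ρ i ξ ζ - ρ i η ζ| < ε

/-- The discrepancy of a bounded function `τ` with respect to an antipodal function `ρ`:
`D_ρ(τ)(ξ) = sup_{η ≠ ξ} (τ ξ + τ η + 2 log ρ(ξ,η))`. -/
noncomputable def discrepancy {Z : Type*} (ρ : Z → Z → ℝ) (τ : Z → ℝ) : Z → ℝ :=
  fun ξ => sSup ((fun η => τ ξ + τ η + 2 * Real.log (ρ ξ η)) '' {η | η ≠ ξ})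

/-- `(log a - log b) * b ≤ a - b` for positive `a`, `b`. -/
lemma log_sub_log_mul_le {a b : ℝ} (ha : 0 < a) (hb : 0 < b) :
    (Real.log a - Real.log b) * b ≤ a - b := by
  have h := Real.log_le_sub_one_of_pos (div_pos ha hb)
  rw [Real.log_div ha.ne' hb.ne'] at h
  have h2 := mul_le_mul_of_nonneg_right h hb.le
  have h3 : (a / b - 1) * b = a - b := by field_simp
  linarith

/-- From the Moebius relation `b² = e^{t₁} e^{t₂} r²` with `r > 0` one gets a logarithmic
identity. -/
lemma moebius_log {b t₁ t₂ r : ℝ} (hb : 0 ≤ b) (hr : 0 < r)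
    (h : b ^ 2 = Real.exp t₁ * Real.exp t₂ * r ^ 2) :
    2 * Real.log b = t₁ + t₂ + 2 * Real.log r := by
  have hb2 : 0 < b ^ 2 := by
    rw [h]; positivity
  have hbpos : 0 < b := by nlinarith
  have hlog := congrArg Real.log h
  rw [Real.log_mul (by positivity) (by positivity), Real.log_mul (Real.exp_ne_zero _)
    (Real.exp_ne_zero _), Real.log_exp, Real.log_exp, Real.log_pow, Real.log_pow] at hlog
  push_cast at hlog
  linarith

/-- For an equicontinuous family of antipodal spaces `(Z λ, ρ λ)` and a fixed
`R > 0`: for every `ε > 0` there is a `δ > 0` (depending only on `R` and `ε`) such that for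
every antipodal space `(Zω, ρω)`, every `λ`, every `δ`-isometry `h : (Zω, ρω) → (Z λ, ρ λ)`,
and every antipodal function `β` on `Z λ` Moebius equivalent to `ρ λ` with `‖τ_β‖_∞ ≤ R`
(where `τ_β = log (dβ/dρ λ)`), one has `‖D_{ρω}(τ_β ∘ h)‖_∞ < ε`. -/
theorem discrepancy_small_along_rough_isometries
    {Λ : Type v} {Z : Λ → Type u} [∀ l, TopologicalSpace (Z l)] [∀ l, CompactSpace (Z l)]
    [∀ l, TopologicalSpace.MetrizableSpace (Z l)]
    (ρ : ∀ l, Z l → Z l → ℝ) (hρ : ∀ l, IsAntipodalFn (ρ l))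
    (hEq : EquicontinuousFamily ρ)
    (R : ℝ) (hR : 0 < R) :
    ∀ ε : ℝ, 0 < ε → ∃ δ : ℝ, 0 < δ ∧
      ∀ (Zω : Type u) (tω : TopologicalSpace Zω) (_ : @CompactSpace Zω tω)
        (_ : @TopologicalSpace.MetrizableSpace Zω tω) (ρω : Zω → Zω → ℝ),
        @IsAntipodalFn Zω tω ρω →
        ∀ (l : Λ) (h : Zω → Z l), IsEpsIsometry ρω (ρ l) δ h →
          ∀ (β : Z l → Z l → ℝ), IsAntipodalFn β →
            ∀ τ : Z l → ℝ, Continuous τ →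
              (∀ ξ η : Z l, β ξ η ^ 2 = Real.exp (τ ξ) * Real.exp (τ η) * ρ l ξ η ^ 2) →
              (∀ ξ : Z l, |τ ξ| ≤ R) →
              (⨆ ξ : Zω, |discrepancy ρω (fun ζ => τ (h ζ)) ξ|) < ε := by
  intro ε hε
  set c : ℝ := Real.exp (-R) with hcdef
  have hc0 : 0 < c := Real.exp_pos _
  have hlogc : Real.log c = -R := Real.log_exp _
  set ε' : ℝ := min (c / 4) (c * ε / 32) with hε'def
  have hε'0 : 0 < ε' := lt_min (by positivity) (by positivity)
  have hε'c : ε' ≤ c / 4 := min_le_left _ _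
  have hε'ε : ε' ≤ c * ε / 32 := min_le_right _ _
  obtain ⟨δ₁, hδ₁0, hδ₁⟩ := hEq ε' hε'0
  set δ : ℝ := min δ₁ (min (c / 8) (c * ε / 32)) with hδdef
  have hδ0 : 0 < δ := lt_min hδ₁0 (lt_min (by positivity) (by positivity))
  have hδδ₁ : δ ≤ δ₁ := min_le_left _ _
  have hδc : δ ≤ c / 8 := le_trans (min_le_right _ _) (min_le_left _ _)
  have hδε : δ ≤ c * ε / 32 := le_trans (min_le_right _ _) (min_le_right _ _)
  refine ⟨δ, hδ0, ?_⟩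
  intro Zω tω _ _ ρω hρω l h hh β hβ τ hτc hMoeb hτR
  obtain ⟨⟨_, hρωsymm, hρωnn, hρωzero⟩, hρω1, hρωant⟩ := hρω
  obtain ⟨⟨_, hlsymm, hlnn, hlzero⟩, hl1, hlant⟩ := hρ l
  obtain ⟨⟨_, hβsymm, hβnn, hβzero⟩, hβ1, hβant⟩ := hβ
  obtain ⟨hdist, hnet⟩ := hh
  have hτub : ∀ x, τ x ≤ R := fun x => (abs_le.mp (hτR x)).2
  have hτlb : ∀ x, -R ≤ τ x := fun x => (abs_le.mp (hτR x)).1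
  -- Basic consequence of the Moebius relation at positive distance
  have K3 : ∀ x y : Z l, 0 < ρ l x y →
      2 * Real.log (β x y) = τ x + τ y + 2 * Real.log (ρ l x y) :=
    fun x y hpos => moebius_log (hβnn x y) hpos (hMoeb x y)
  -- At antipodes of β: the sum vanishes and the ρ-distance is at least c
  have K1 : ∀ x y : Z l, β x y = 1 →
      τ x + τ y + 2 * Real.log (ρ l x y) = 0 ∧ c ≤ ρ l x y := by
    intro x y hxy
    have hm := hMoeb x y
    rw [hxy, one_pow] at hm
    have hx1 : Real.exp (-τ x) * Real.exp (τ x) = 1 := by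
      rw [← Real.exp_add]; simp
    have hy1 : Real.exp (-τ y) * Real.exp (τ y) = 1 := by
      rw [← Real.exp_add]; simp
    have hpp : Real.exp (-τ x) * Real.exp (-τ y) = ρ l x y ^ 2 := by
      calc Real.exp (-τ x) * Real.exp (-τ y)
          = Real.exp (-τ x) * Real.exp (-τ y) *
            (Real.exp (τ x) * Real.exp (τ y) * ρ l x y ^ 2) := by rw [← hm, mul_one]
        _ = (Real.exp (-τ x) * Real.exp (τ x)) * (Real.exp (-τ y) * Real.exp (τ y))
            * ρ l x y ^ 2 := by ring
        _ = ρ l x y ^ 2 := by rw [hx1, hy1]; ring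
    have hcc : c ^ 2 ≤ ρ l x y ^ 2 := by
      rw [← hpp, sq]
      have e1 : c ≤ Real.exp (-τ x) := Real.exp_le_exp.mpr (by linarith only [hτub x])
      have e2 : c ≤ Real.exp (-τ y) := Real.exp_le_exp.mpr (by linarith only [hτub y])
      exact mul_le_mul e1 e2 hc0.le (Real.exp_pos _).le
    have hcle : c ≤ ρ l x y := le_of_pow_le_pow_left₀ two_ne_zero (hlnn x y) hcc
    have hrpos : 0 < ρ l x y := lt_of_lt_of_le hc0 hcle
    have hlog := K3 x y hrpos
    rw [hxy, Real.log_one] at hlog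
    exact ⟨by linarith only [hlog], hcle⟩
  -- Near-continuity of τ with modulus depending only on R and the equicontinuity data
  have K2 : ∀ y z : Z l, ρ l y z < δ₁ → τ z - τ y ≤ 4 * ε' / c := by
    intro y z hyz
    obtain ⟨σ, hσ⟩ := hβant y
    obtain ⟨heq0, hcσ⟩ := K1 y σ hσ
    have habs := abs_lt.mp (hδ₁ l y z hyz σ)
    have hzσpos : 0 < ρ l z σ := by linarith only [habs.2, hcσ, hε'c, hc0]
    have hβzσ : 2 * Real.log (β z σ) = τ z + τ σ + 2 * Real.log (ρ l z σ) := K3 z σ hzσpos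
    have hβle : Real.log (β z σ) ≤ 0 := Real.log_nonpos (hβnn z σ) (hβ1 z σ)
    have hmain : τ z - τ y ≤ 2 * (Real.log (ρ l y σ) - Real.log (ρ l z σ)) := by
      linarith only [heq0, hβzσ, hβle]
    have hL := log_sub_log_mul_le (lt_of_lt_of_le hc0 hcσ) hzσpos
    set L : ℝ := Real.log (ρ l y σ) - Real.log (ρ l z σ) with hLdef
    clear_value L
    rcases le_or_gt L 0 with hL0 | hL0
    · have h0 : 0 ≤ 4 * ε' / c := by positivity
      linarith only [hmain, hL0, h0]
    · rw [le_div_iff₀ hc0]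
      have h34 : 3 * c / 4 ≤ ρ l z σ := by linarith only [habs.2, hcσ, hε'c]
      have hmul : L * (3 * c / 4) ≤ L * ρ l z σ := mul_le_mul_of_nonneg_left h34 hL0.le
      have h5 := mul_le_mul_of_nonneg_right hmain hc0.le
      linarith only [h5, hmul, hL, habs.2, hε'0]
  -- The pointwise bound on the discrepancy
  have key : ∀ ξ : Zω, |discrepancy ρω (fun ζ => τ (h ζ)) ξ| ≤ ε / 2 := by
    intro ξ
    set S : Set ℝ := (fun η => τ (h ξ) + τ (h η) + 2 * Real.log (ρω ξ η)) '' {η | η ≠ ξ}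
      with hSdef
    have hD : discrepancy ρω (fun ζ => τ (h ζ)) ξ = sSup S := rfl
    have hSne : S.Nonempty := by
      obtain ⟨η, hη⟩ := hρωant ξ
      refine ⟨_, ⟨η, ?_, rfl⟩⟩
      intro he
      rw [he, (hρωzero ξ ξ).mpr rfl] at hη
      norm_num at hη
    have hSbdd : BddAbove S := by
      refine ⟨2 * R, ?_⟩
      rintro y ⟨η, -, rfl⟩
      have hlog : Real.log (ρω ξ η) ≤ 0 := Real.log_nonpos (hρωnn ξ η) (hρω1 ξ η)
      have h1 := hτub (h ξ)
      have h2 := hτub (h η)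
      dsimp only
      linarith only [hlog, h1, h2]
    rw [hD, abs_le]
    constructor
    · -- lower bound on the supremum
      obtain ⟨ζ, hζ⟩ := hβant (h ξ)
      obtain ⟨heq0, hcζ⟩ := K1 (h ξ) ζ hζ
      obtain ⟨η₀, hη₀⟩ := hnet ζ
      have hη₀δ₁ : ρ l (h η₀) ζ < δ₁ := lt_of_lt_of_le hη₀ hδδ₁
      have hτζ : τ ζ - τ (h η₀) ≤ 4 * ε' / c := K2 (h η₀) ζ hη₀δ₁
      have hec' : |ρ l (h ξ) (h η₀) - ρ l (h ξ) ζ| < ε' := by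
        rw [hlsymm (h ξ) (h η₀), hlsymm (h ξ) ζ]
        exact hδ₁ l (h η₀) ζ hη₀δ₁ (h ξ)
      have habs := abs_lt.mp hec'
      have hdξη := abs_lt.mp (hdist ξ η₀)
      have hρωlb : 5 * c / 8 ≤ ρω ξ η₀ := by
        linarith only [habs.1, hdξη.2, hcζ, hε'c, hδc]
      have hρωpos : 0 < ρω ξ η₀ := by linarith only [hρωlb, hc0]
      have hη₀ne : η₀ ≠ ξ := by
        intro he
        rw [he, (hρωzero ξ ξ).mpr rfl] at hρωpos
        exact lt_irrefl 0 hρωpos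
      have hmem : τ (h ξ) + τ (h η₀) + 2 * Real.log (ρω ξ η₀) ∈ S := ⟨η₀, hη₀ne, rfl⟩
      have hle := le_csSup hSbdd hmem
      have hL := log_sub_log_mul_le (lt_of_lt_of_le hc0 hcζ) hρωpos
      set L : ℝ := Real.log (ρ l (h ξ) ζ) - Real.log (ρω ξ η₀) with hLdef
      clear_value L
      have hLbound : L ≤ ε / 10 := by
        rcases le_or_gt L 0 with h0 | h0
        · linarith only [h0, hε]
        · have hmul : L * (5 * c / 8) ≤ L * ρω ξ η₀ := mul_le_mul_of_nonneg_left hρωlb h0.le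
          have hdiff : ρ l (h ξ) ζ - ρω ξ η₀ < δ + ε' := by
            linarith only [habs.1, hdξη.2]
          have hLc : L * c ≤ ε / 10 * c := by
            linarith only [hmul, hL, hdiff, hδε, hε'ε]
          exact le_of_mul_le_mul_right hLc hc0
      have h4ε' : 4 * ε' / c ≤ ε / 8 := by
        rw [div_le_iff₀ hc0]
        linarith only [hε'ε]
      have hterm : -(ε / 2) ≤ τ (h ξ) + τ (h η₀) + 2 * Real.log (ρω ξ η₀) := by
        have expand : τ (h ξ) + τ (h η₀) + 2 * Real.log (ρω ξ η₀)
            = (τ (h ξ) + τ ζ + 2 * Real.log (ρ l (h ξ) ζ)) - (τ ζ - τ (h η₀)) - 2 * L := by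
          rw [hLdef]; ring
        rw [expand, heq0]
        linarith only [hτζ, h4ε', hLbound, hε]
      linarith only [hle, hterm]
    · -- upper bound on the supremum
      apply csSup_le hSne
      rintro y ⟨η, hηne, rfl⟩
      have hρωpos : 0 < ρω ξ η := by
        rcases lt_or_eq_of_le (hρωnn ξ η) with hp | hp
        · exact hp
        · exact absurd ((hρωzero ξ η).mp hp.symm).symm hηne
      dsimp only
      rcases lt_or_ge (ρω ξ η) (c / 2) with hcase | hcase
      · have hlog : Real.log (ρω ξ η) ≤ Real.log (c / 2) :=
          Real.log_le_log hρωpos hcase.le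
        have hlc2 : Real.log (c / 2) = -R - Real.log 2 := by
          rw [Real.log_div hc0.ne' two_ne_zero, hlogc]
        have h2 : (0:ℝ) ≤ Real.log 2 := Real.log_nonneg one_le_two
        have h1 := hτub (h ξ)
        have h3 := hτub (h η)
        linarith only [hlog, hlc2, h2, h1, h3, hε]
      · have hdξη := abs_lt.mp (hdist ξ η)
        have hρlpos : 0 < ρ l (h ξ) (h η) := by
          linarith only [hdξη.1, hcase, hδc, hc0]
        have hlog3 := K3 (h ξ) (h η) hρlpos
        have hβpos' : Real.log (β (h ξ) (h η)) ≤ 0 :=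
          Real.log_nonpos (hβnn _ _) (hβ1 _ _)
        have hL := log_sub_log_mul_le hρωpos hρlpos
        set L : ℝ := Real.log (ρω ξ η) - Real.log (ρ l (h ξ) (h η)) with hLdef
        clear_value L
        have hLbound : L ≤ ε / 12 := by
          rcases le_or_gt L 0 with h0 | h0
          · linarith only [h0, hε]
          · have h38 : 3 * c / 8 ≤ ρ l (h ξ) (h η) := by
              linarith only [hdξη.1, hcase, hδc]
            have hmul : L * (3 * c / 8) ≤ L * ρ l (h ξ) (h η) :=
              mul_le_mul_of_nonneg_left h38 h0.le
            have hdiff : ρω ξ η - ρ l (h ξ) (h η) < δ := by linarith only [hdξη.1]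
            have hLc : L * c ≤ ε / 12 * c := by
              linarith only [hmul, hL, hdiff, hδε]
            exact le_of_mul_le_mul_right hLc hc0
        have expand : τ (h ξ) + τ (h η) + 2 * Real.log (ρω ξ η)
            = 2 * Real.log (β (h ξ) (h η)) + 2 * L := by
          rw [hLdef]; linarith only [hlog3]
        rw [expand]
        linarith only [hβpos', hLbound, hε]
  calc (⨆ ξ : Zω, |discrepancy ρω (fun ζ => τ (h ζ)) ξ|) ≤ ε / 2 :=
        Real.iSup_le key (by positivity)
    _ < ε := by linarith only [hε]
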